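/- For j = 2^t + 1 with t ≥ 2, the binomial coefficient C(j, (j+1)/2) is divisible by 2 but not by 4. -/

import Mathlib

/-- For `j = 2^t + 1` with `t ≥ 2`, the binomial coefficient `C(j, (j+1)/2)` is
divisible by `2` but not by `4`. -/
theorem choose_two_pow_add_one (t : ℕ) (ht : 2 ≤ t) :
    2 ∣ Nat.choose (2 ^ t + 1) ((2 ^ t + 1 + 1) / 2) ∧
      ¬ (4 ∣ Nat.choose (2 ^ t + 1) ((2 ^ t + 1 + 1) / 2)) := by
  obtain ⟨s, rfl⟩ : ∃ s, t = s + 1 := ⟨t - 1, by omega⟩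
  have hs : 1 ≤ s := by omega
  have hpos : 0 < 2 ^ s := Nat.pow_pos (by norm_num)
  have h2s : 2 ^ (s + 1) = 2 ^ s + 2 ^ s := by ring
  have hk : (2 ^ (s + 1) + 1 + 1) / 2 = 2 ^ s + 1 := by rw [h2s]; omega
  rw [hk]
  set n : ℕ := 2 ^ (s + 1) + 1 with hn
  set k : ℕ := 2 ^ s + 1 with hkdef
  have hkn : k ≤ n := by omega
  have hsub : n - k = 2 ^ s := by omega
  have hs1 : 1 < 2 ^ s := Nat.one_lt_two_pow_iff.mpr (by omega)
  have hc0 : Nat.choose n k ≠ 0 := (Nat.choose_pos hkn).ne'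
  haveI : Fact (Nat.Prime 2) := ⟨Nat.prime_two⟩
  have hlog : Nat.log 2 n < s + 2 := by
    have h4 : (2:ℕ) ^ (s + 2) = 4 * 2 ^ s := by ring
    exact Nat.log_lt_of_lt_pow (by omega) (by omega)
  have hval : padicValNat 2 (Nat.choose n k) = 1 := by
    rw [padicValNat_choose hkn hlog]
    have : ((Finset.Ico 1 (s + 2)).filter
        fun i => 2 ^ i ≤ k % 2 ^ i + (n - k) % 2 ^ i) = {s + 1} := by
      ext i
      simp only [Finset.mem_filter, Finset.mem_Ico, Finset.mem_singleton]
      constructor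
      · rintro ⟨⟨h1, h2⟩, hcond⟩
        by_contra hne
        have hi : i ≤ s := by omega
        have hdvd : 2 ^ i ∣ 2 ^ s := pow_dvd_pow 2 hi
        have hmod0 : 2 ^ s % 2 ^ i = 0 := Nat.mod_eq_zero_of_dvd hdvd
        have h1lt : 1 < 2 ^ i := Nat.one_lt_two_pow_iff.mpr (by omega)
        have hmod1 : k % 2 ^ i = 1 := by
          rw [hkdef, Nat.add_mod, hmod0, Nat.mod_eq_of_lt h1lt]
          simp [Nat.mod_eq_of_lt h1lt]
        rw [hsub, hmod1, hmod0] at hcond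
        have : 2 ≤ 2 ^ i := by
          calc 2 = 2 ^ 1 := rfl
          _ ≤ 2 ^ i := Nat.pow_le_pow_right (by norm_num) h1
        omega
      · rintro rfl
        have hklt : k < 2 ^ (s + 1) := by omega
        have hsublt : n - k < 2 ^ (s + 1) := by omega
        rw [Nat.mod_eq_of_lt hklt, hsub, Nat.mod_eq_of_lt (by omega)]
        omega
    rw [this, Finset.card_singleton]
  have hfact : (Nat.choose n k).factorization 2 = 1 := by
    rw [Nat.factorization_def _ Nat.prime_two]; exact hval
  constructor
  · have := (Nat.Prime.pow_dvd_iff_le_factorization Nat.prime_two hc0 (k := 1)).mpr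
      (by rw [hfact])
    simpa using this
  · intro h4
    have : (2 : ℕ) ^ 2 ∣ Nat.choose n k := by norm_num at h4 ⊢; exact h4
    have := (Nat.Prime.pow_dvd_iff_le_factorization Nat.prime_two hc0).mp this
    omega
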